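/- Assume (H1), (H3) and (H4), and let q ∈ Q be fixed. Then the restriction Π_q of the orthogonal projection Π onto H⁻ to the amenable set 𝔄(q) is a homeomorphism of 𝔄(q) onto its image Π𝔄(q) ⊂ H⁻. -/

import Mathlib

open MeasureTheory Set Bornology Filter Topology RealInnerProductSpace

noncomputable section

variable {Q H : Type*}

section Defs
variable [MetricSpace Q] [NormedAddCommGroup H] [InnerProductSpace ℝ H] [CompleteSpace H]

def IsFlow (ϑ : ℝ → Q → Q) : Prop :=
  (∀ q, ϑ 0 q = q) ∧ (∀ t s q, ϑ (t + s) q = ϑ t (ϑ s q)) ∧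
    Continuous fun p : ℝ × Q => ϑ p.1 p.2

def IsCocycle (ϑ : ℝ → Q → Q) (ψ : ℝ → Q → H → H) : Prop :=
  (∀ q u, ψ 0 q u = u) ∧
  (∀ t s : ℝ, 0 ≤ t → 0 ≤ s → ∀ q u, ψ (t + s) q u = ψ t (ϑ s q) (ψ s q u)) ∧
  ContinuousOn (fun p : ℝ × Q × H => ψ p.1 p.2.1 p.2.2) {p : ℝ × Q × H | 0 ≤ p.1}

def IsCompleteTraj (ϑ : ℝ → Q → Q) (ψ : ℝ → Q → H → H) (q : Q) (u : ℝ → H) : Prop :=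
  Continuous u ∧ ∀ t s : ℝ, 0 ≤ t → u (t + s) = ψ t (ϑ s q) (u s)

def IsAmenable (ν : ℝ) (u : ℝ → H) : Prop :=
  IntegrableOn (fun s : ℝ => Real.exp (2 * ν * s) * ‖u s‖ ^ 2) (Set.Iic (0:ℝ))

def amenSet (ϑ : ℝ → Q → Q) (ψ : ℝ → Q → H → H) (ν : ℝ) (q : Q) : Set H :=
  {u₀ | ∃ u : ℝ → H, IsCompleteTraj ϑ ψ q u ∧ IsAmenable ν u ∧ u 0 = u₀}

structure HypH1 (P : H →L[ℝ] H) (Hplus Hminus : Submodule ℝ H) : Prop where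
  selfAdj : IsSelfAdjoint P
  closed_plus : IsClosed (Hplus : Set H)
  orth : Hminus = Hplusᗮ
  inv_plus : ∀ u ∈ Hplus, P u ∈ Hplus
  inv_minus : ∀ u ∈ Hminus, P u ∈ Hminus
  pos : ∀ u ∈ Hplus, u ≠ 0 → (0:ℝ) < ⟪P u, u⟫
  neg : ∀ u ∈ Hminus, u ≠ 0 → ⟪P u, u⟫ < 0

def HypH2 (Hminus : Submodule ℝ H) (j : ℕ) : Prop :=
  FiniteDimensional ℝ Hminus ∧ Module.finrank ℝ Hminus = j

def HypH3 (ψ : ℝ → Q → H → H) (P : H →L[ℝ] H) (δ ν : ℝ) : Prop :=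
  0 < δ ∧ 0 < ν ∧ ∀ (q : Q) (u v : H) (l r : ℝ), 0 ≤ l → l ≤ r →
    Real.exp (2 * ν * r) * ⟪P (ψ r q u - ψ r q v), ψ r q u - ψ r q v⟫ -
      Real.exp (2 * ν * l) * ⟪P (ψ l q u - ψ l q v), ψ l q u - ψ l q v⟫ ≤
      -δ * ∫ s in l..r, Real.exp (2 * ν * s) * ‖ψ s q u - ψ s q v‖ ^ 2

def IsOrthProjOnto (Hminus : Submodule ℝ H) (Pi : H →L[ℝ] H) : Prop :=
  (∀ u, Pi u ∈ Hminus) ∧ ∀ u, u - Pi u ∈ Hminusᗮ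

def HypCOM2 (ψ : ℝ → Q → H → H) : Prop :=
  ∃ tc : ℝ, 0 < tc ∧ ∀ (q : Q) (s : Set H), IsBounded s → IsCompact (closure (ψ tc q '' s))

def HypCOM3 (ψ : ℝ → Q → H → H) : Prop :=
  ∀ (q : Q) (u₀ : H), IsBounded ((fun t => ψ t q u₀) '' Set.Ici (0:ℝ)) →
    IsCompact (closure ((fun t => ψ t q u₀) '' Set.Ici (0:ℝ)))

def LyapunovStable (ψ : ℝ → Q → H → H) (q : Q) (v : ℝ → H) : Prop :=
  ∀ ε > 0, ∃ η > 0, ∀ u₀ : H, ‖u₀ - v 0‖ < η → ∀ t ≥ 0, ‖ψ t q u₀ - v t‖ < ε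

end Defs

def circleFlow (σ : ℝ) : ℝ → AddCircle σ → AddCircle σ := fun t θ => θ + (t : AddCircle σ)

section AuxLemmas
variable {Q H : Type*} [MetricSpace Q] [NormedAddCommGroup H] [InnerProductSpace ℝ H]
  [CompleteSpace H]

lemma diff_integrable {ν : ℝ} {u v : ℝ → H} (hu : Continuous u) (hv : Continuous v)
    (hau : IsAmenable ν u) (hav : IsAmenable ν v) :
    IntegrableOn (fun s : ℝ => Real.exp (2 * ν * s) * ‖u s - v s‖ ^ 2) (Set.Iic (0:ℝ)) := by
  have hmeas : AEStronglyMeasurable (fun s : ℝ => Real.exp (2 * ν * s) * ‖u s - v s‖ ^ 2)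
      (volume.restrict (Set.Iic (0:ℝ))) := by
    apply Continuous.aestronglyMeasurable
    continuity
  refine Integrable.mono' ((hau.const_mul 2).add (hav.const_mul 2)) hmeas ?_
  filter_upwards with s
  rw [Real.norm_eq_abs, abs_of_nonneg (by positivity)]
  have h1 : ‖u s - v s‖ ≤ ‖u s‖ + ‖v s‖ := norm_sub_le _ _
  have he : (0:ℝ) < Real.exp (2 * ν * s) := Real.exp_pos _
  simp only [Pi.add_apply]
  have h2 : ‖u s - v s‖ ^ 2 ≤ 2 * ‖u s‖ ^ 2 + 2 * ‖v s‖ ^ 2 := by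
    nlinarith [norm_nonneg (u s - v s), norm_nonneg (u s), norm_nonneg (v s),
      sq_nonneg (‖u s‖ - ‖v s‖)]
  nlinarith [mul_le_mul_of_nonneg_left h2 he.le]

lemma key_inequality {ϑ : ℝ → Q → Q} {ψ : ℝ → Q → H → H}
    (hcoc : IsCocycle ϑ ψ) (P : H →L[ℝ] H) {Hplus Hminus : Submodule ℝ H}
    (h1 : HypH1 P Hplus Hminus) {δ ν : ℝ} (h3 : HypH3 ψ P δ ν)
    {Pi : H →L[ℝ] H} (hPi : IsOrthProjOnto Hminus Pi)
    {q : Q} {u v : ℝ → H} (hu : IsCompleteTraj ϑ ψ q u) (hv : IsCompleteTraj ϑ ψ q v)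
    (hau : IsAmenable ν u) (hav : IsAmenable ν v) :
    δ * ∫ s in Set.Iic (0:ℝ), Real.exp (2 * ν * s) * ‖u s - v s‖ ^ 2 ≤
      ‖P‖ * ‖Pi (u 0 - v 0)‖ ^ 2 := by
  obtain ⟨hδ, hν, h3'⟩ := h3
  set F : ℝ → ℝ := fun s => Real.exp (2 * ν * s) * ‖u s - v s‖ ^ 2 with hF
  have hFnn : ∀ s, 0 ≤ F s := fun s => by positivity
  have hF_int : IntegrableOn F (Set.Iic (0:ℝ)) := diff_integrable hu.1 hv.1 hau hav
  -- Step (b): one-sided energy inequality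
  have hstep : ∀ s : ℝ, s ≤ 0 →
      ⟪P (u 0 - v 0), u 0 - v 0⟫ ≤
        Real.exp (2 * ν * s) * ⟪P (u s - v s), u s - v s⟫ - δ * ∫ σ in s..(0:ℝ), F σ := by
    intro s hs
    have hns : (0:ℝ) ≤ -s := by linarith
    have h := h3' (ϑ s q) (u s) (v s) 0 (-s) le_rfl hns
    have hu0 : ψ (-s) (ϑ s q) (u s) = u 0 := by
      have := hu.2 (-s) s hns; simp at this; rw [this]
    have hv0 : ψ (-s) (ϑ s q) (v s) = v 0 := by
      have := hv.2 (-s) s hns; simp at this; rw [this]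
    rw [hu0, hv0, hcoc.1, hcoc.1] at h
    -- rewrite the interval integral
    have hint : (∫ τ in (0:ℝ)..(-s), Real.exp (2 * ν * τ) *
          ‖ψ τ (ϑ s q) (u s) - ψ τ (ϑ s q) (v s)‖ ^ 2) =
        Real.exp (-(2 * ν * s)) * ∫ σ in s..(0:ℝ), F σ := by
      have hcongr : ∀ τ ∈ Set.uIcc (0:ℝ) (-s),
          Real.exp (2 * ν * τ) * ‖ψ τ (ϑ s q) (u s) - ψ τ (ϑ s q) (v s)‖ ^ 2 =
            Real.exp (-(2 * ν * s)) * F (τ + s) := by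
        intro τ hτ
        rw [Set.uIcc_of_le hns] at hτ
        have hτ0 : (0:ℝ) ≤ τ := hτ.1
        have h1 : ψ τ (ϑ s q) (u s) = u (τ + s) := (hu.2 τ s hτ0).symm
        have h2 : ψ τ (ϑ s q) (v s) = v (τ + s) := (hv.2 τ s hτ0).symm
        rw [h1, h2, hF]
        have hee : Real.exp (2 * ν * τ) = Real.exp (-(2 * ν * s)) * Real.exp (2 * ν * (τ + s)) := by
          rw [← Real.exp_add]; ring_nf
        rw [hee]; ring
      rw [intervalIntegral.integral_congr hcongr, intervalIntegral.integral_const_mul,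
        intervalIntegral.integral_comp_add_right (fun σ => F σ) s]
      norm_num
    rw [hint] at h
    rw [show (2:ℝ) * ν * -s = -(2 * ν * s) by ring] at h
    simp only [mul_zero, Real.exp_zero, one_mul] at h
    set E := Real.exp (2 * ν * s) with hEdef
    set E' := Real.exp (-(2 * ν * s)) with hE'def
    set J := ∫ σ in s..(0:ℝ), F σ with hJdef
    set V0 := ⟪P (u 0 - v 0), u 0 - v 0⟫ with hV0def
    set Vs := ⟪P (u s - v s), u s - v s⟫ with hVsdef
    have hE : (0:ℝ) < E := Real.exp_pos _
    have hEE : E * E' = 1 := by rw [hEdef, hE'def, ← Real.exp_add]; simp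
    have h2 : E' * V0 ≤ Vs - δ * (E' * J) := by linarith
    have h3 : E * (E' * V0) ≤ E * (Vs - δ * (E' * J)) := mul_le_mul_of_nonneg_left h2 hE.le
    calc V0 = E * (E' * V0) := by rw [← mul_assoc, hEE, one_mul]
      _ ≤ E * (Vs - δ * (E' * J)) := h3
      _ = E * Vs - δ * (E * E') * J := by ring
      _ = E * Vs - δ * J := by rw [hEE]; ring
  -- Step (c): a sequence sₙ → -∞ along which F (sₙ) → 0
  have hex : ∀ n : ℕ, ∃ x : ℝ, x ≤ -(n:ℝ) ∧ F x ≤ 1 / (n + 1) := by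
    intro n
    by_contra hcon
    push_neg at hcon
    have hint' : IntegrableOn F (Set.Iic (-(n:ℝ))) :=
      hF_int.mono_set (Set.Iic_subset_Iic.mpr (neg_nonpos.mpr (Nat.cast_nonneg n)))
    have hcst : Integrable (fun _ : ℝ => (1:ℝ) / (n + 1))
        (volume.restrict (Set.Iic (-(n:ℝ)))) := by
      refine Integrable.mono' hint' aestronglyMeasurable_const ?_
      rw [ae_restrict_iff' measurableSet_Iic]
      filter_upwards with x hx
      rw [Real.norm_eq_abs, abs_of_nonneg (by positivity)]
      exact (hcon x hx).le
    rw [integrable_const_iff] at hcst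
    rcases hcst with hc | hc
    · have : (0:ℝ) < 1 / (n + 1) := by positivity
      rw [hc] at this; exact lt_irrefl _ this
    · have hc := hc.measure_univ_lt_top
      rw [Measure.restrict_apply_univ, Real.volume_Iic] at hc
      exact (lt_irrefl _ hc).elim
  choose sq hsq1 hsq2 using hex
  have hsq_bot : Tendsto sq atTop atBot := by
    apply tendsto_atBot_mono hsq1
    exact tendsto_neg_atBot_iff.mpr tendsto_natCast_atTop_atTop
  have hFsq : Tendsto (fun n => F (sq n)) atTop (𝓝 0) := by
    apply squeeze_zero (fun n => hFnn _) hsq2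
    exact tendsto_one_div_add_atTop_nhds_zero_nat
  -- Step (d): pass to the limit in hstep
  have hterm1 : Tendsto (fun n => Real.exp (2 * ν * sq n) *
      ⟪P (u (sq n) - v (sq n)), u (sq n) - v (sq n)⟫) atTop (𝓝 0) := by
    refine squeeze_zero_norm (a := fun n => ‖P‖ * F (sq n)) ?_ ?_
    · intro n
      set w := u (sq n) - v (sq n)
      have h1 : |⟪P w, w⟫| ≤ ‖P‖ * ‖w‖ ^ 2 := by
        calc |⟪P w, w⟫| ≤ ‖P w‖ * ‖w‖ := abs_real_inner_le_norm _ _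
          _ ≤ (‖P‖ * ‖w‖) * ‖w‖ :=
            mul_le_mul_of_nonneg_right (P.le_opNorm w) (norm_nonneg w)
          _ = ‖P‖ * ‖w‖ ^ 2 := by ring
      have he : (0:ℝ) < Real.exp (2 * ν * sq n) := Real.exp_pos _
      rw [Real.norm_eq_abs, abs_mul, abs_of_nonneg he.le, hF]
      calc Real.exp (2 * ν * sq n) * |⟪P w, w⟫| ≤
            Real.exp (2 * ν * sq n) * (‖P‖ * ‖w‖ ^ 2) :=
              mul_le_mul_of_nonneg_left h1 he.le
        _ = ‖P‖ * (Real.exp (2 * ν * sq n) * ‖w‖ ^ 2) := by ring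
    · simpa using hFsq.const_mul ‖P‖
  have hterm2 : Tendsto (fun n => ∫ σ in (sq n)..(0:ℝ), F σ) atTop
      (𝓝 (∫ σ in Set.Iic (0:ℝ), F σ)) :=
    intervalIntegral_tendsto_integral_Iic 0 hF_int hsq_bot
  have hlim : Tendsto (fun n => Real.exp (2 * ν * sq n) *
        ⟪P (u (sq n) - v (sq n)), u (sq n) - v (sq n)⟫ -
        δ * ∫ σ in (sq n)..(0:ℝ), F σ) atTop
      (𝓝 (-(δ * ∫ σ in Set.Iic (0:ℝ), F σ))) := by
    have := hterm1.sub ((hterm2.const_mul δ))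
    simpa using this
  have hV0 : ⟪P (u 0 - v 0), u 0 - v 0⟫ ≤ -(δ * ∫ σ in Set.Iic (0:ℝ), F σ) :=
    ge_of_tendsto hlim (Filter.Eventually.of_forall fun n =>
      hstep (sq n) (le_trans (hsq1 n) (neg_nonpos.mpr (Nat.cast_nonneg n))))
  -- Step (e): decomposition of V(w₀)
  haveI : CompleteSpace ↥Hplus := h1.closed_plus.completeSpace_coe
  have horth : Hminusᗮ = Hplus := by rw [h1.orth, Submodule.orthogonal_orthogonal]
  set w0 := u 0 - v 0 with hw0
  set b := Pi w0 with hb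
  set a := w0 - b with ha
  have haP : a ∈ Hplus := horth ▸ hPi.2 w0
  have hbM : b ∈ Hminus := hPi.1 w0
  have hcross1 : ⟪P a, b⟫ = 0 := by
    have hPa : P a ∈ Hplus := h1.inv_plus a haP
    have hbo : b ∈ Hplusᗮ := h1.orth ▸ hbM
    exact ((Submodule.mem_orthogonal Hplus b).mp hbo (P a) hPa)
  have hcross2 : ⟪P b, a⟫ = 0 := by
    have hPb : P b ∈ Hminus := h1.inv_minus b hbM
    exact ((Submodule.mem_orthogonal Hminus a).mp (hPi.2 w0) (P b) hPb)
  have hdec : ⟪P w0, w0⟫ = ⟪P a, a⟫ + ⟪P b, b⟫ := by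
    have hab : w0 = a + b := by rw [ha]; abel
    calc ⟪P w0, w0⟫ = ⟪P (a + b), a + b⟫ := by rw [← hab]
      _ = ⟪P a, a⟫ + ⟪P a, b⟫ + (⟪P b, a⟫ + ⟪P b, b⟫) := by
        rw [map_add, inner_add_left, inner_add_right, inner_add_right]
      _ = ⟪P a, a⟫ + ⟪P b, b⟫ := by rw [hcross1, hcross2]; ring
  have hVa : 0 ≤ ⟪P a, a⟫ := by
    rcases eq_or_ne a 0 with h | h
    · simp [h]
    · exact (h1.pos a haP h).le
  have hVb : -(‖P‖ * ‖b‖ ^ 2) ≤ ⟪P b, b⟫ := by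
    have h1' : |⟪P b, b⟫| ≤ ‖P‖ * ‖b‖ ^ 2 := by
      calc |⟪P b, b⟫| ≤ ‖P b‖ * ‖b‖ := abs_real_inner_le_norm _ _
        _ ≤ (‖P‖ * ‖b‖) * ‖b‖ := mul_le_mul_of_nonneg_right (P.le_opNorm b) (norm_nonneg b)
        _ = ‖P‖ * ‖b‖ ^ 2 := by ring
    linarith [neg_abs_le ⟪P b, b⟫]
  have := hV0
  rw [hdec] at this
  linarith

lemma inj_lemma {ϑ : ℝ → Q → Q} {ψ : ℝ → Q → H → H}
    (hcoc : IsCocycle ϑ ψ) (P : H →L[ℝ] H) {Hplus Hminus : Submodule ℝ H}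
    (h1 : HypH1 P Hplus Hminus) {δ ν : ℝ} (h3 : HypH3 ψ P δ ν)
    {Pi : H →L[ℝ] H} (hPi : IsOrthProjOnto Hminus Pi)
    {q : Q} {u v : ℝ → H} (hu : IsCompleteTraj ϑ ψ q u) (hv : IsCompleteTraj ϑ ψ q v)
    (hau : IsAmenable ν u) (hav : IsAmenable ν v)
    (hpi : Pi (u 0) = Pi (v 0)) : u 0 = v 0 := by
  have hkey := key_inequality hcoc P h1 h3 hPi hu hv hau hav
  rw [map_sub, hpi, sub_self] at hkey
  simp only [norm_zero] at hkey
  set F : ℝ → ℝ := fun s => Real.exp (2 * ν * s) * ‖u s - v s‖ ^ 2 with hF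
  have hFnn : ∀ s, 0 ≤ F s := fun s => by positivity
  have hF_int : IntegrableOn F (Set.Iic (0:ℝ)) := diff_integrable hu.1 hv.1 hau hav
  have hnn : 0 ≤ ∫ s in Set.Iic (0:ℝ), F s :=
    setIntegral_nonneg measurableSet_Iic fun s _ => hFnn s
  have hzero : ∫ s in Set.Iic (0:ℝ), F s = 0 := by
    have hδ := h3.1
    nlinarith
  have hae : F =ᶠ[ae (volume.restrict (Set.Iic (0:ℝ)))] 0 :=
    (integral_eq_zero_iff_of_nonneg hFnn hF_int).mp hzero
  have hae' : ∀ᵐ x ∂volume, x ∈ Set.Iic (0:ℝ) → F x = 0 := by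
    rw [← ae_restrict_iff' measurableSet_Iic]
    exact hae
  have hne : ({x : ℝ | x ∈ Set.Iic (0:ℝ) → F x = 0} ∩ Set.Iio 0).Nonempty := by
    by_contra hcon
    rw [Set.not_nonempty_iff_eq_empty] at hcon
    have hsub : Set.Iio (0:ℝ) ⊆ {x | ¬(x ∈ Set.Iic (0:ℝ) → F x = 0)} := by
      intro x hx hc
      exact Set.eq_empty_iff_forall_notMem.mp hcon x ⟨hc, hx⟩
    have h0 : volume (Set.Iio (0:ℝ)) = 0 :=
      measure_mono_null hsub (ae_iff.mp hae')
    rw [Real.volume_Iio] at h0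
    simp at h0
  obtain ⟨σ0, hσ0F, hσ0lt'⟩ := hne
  have hσ0lt : σ0 < 0 := Set.mem_Iio.mp hσ0lt'
  have hFσ0 : F σ0 = 0 := hσ0F (Set.mem_Iic.mpr hσ0lt.le)
  have huv : u σ0 = v σ0 := by
    rw [hF] at hFσ0
    simp only [mul_eq_zero] at hFσ0
    rcases hFσ0 with h | h
    · exact absurd h (Real.exp_ne_zero _)
    · have := pow_eq_zero_iff (n := 2) (by norm_num) |>.mp h
      rwa [norm_eq_zero, sub_eq_zero] at this
  have h0u : u 0 = ψ (-σ0) (ϑ σ0 q) (u σ0) := by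
    have := hu.2 (-σ0) σ0 (by linarith); simpa using this
  have h0v : v 0 = ψ (-σ0) (ϑ σ0 q) (v σ0) := by
    have := hv.2 (-σ0) σ0 (by linarith); simpa using this
  rw [h0u, h0v, huv]

lemma seq_tendsto {ϑ : ℝ → Q → Q} {ψ : ℝ → Q → H → H}
    (hflow : IsFlow ϑ) (hcoc : IsCocycle ϑ ψ) (P : H →L[ℝ] H)
    {Hplus Hminus : Submodule ℝ H}
    (h1 : HypH1 P Hplus Hminus) {δ ν : ℝ} (h3 : HypH3 ψ P δ ν)
    {Pi : H →L[ℝ] H} (hPi : IsOrthProjOnto Hminus Pi)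
    {q : Q} {u : ℕ → ℝ → H} {u₀ : ℝ → H}
    (htr : ∀ n, IsCompleteTraj ϑ ψ q (u n)) (ham : ∀ n, IsAmenable ν (u n))
    (htr0 : IsCompleteTraj ϑ ψ q u₀) (ham0 : IsAmenable ν u₀)
    (hconv : Tendsto (fun n => Pi (u n 0)) atTop (𝓝 (Pi (u₀ 0)))) :
    Tendsto (fun n => u n 0) atTop (𝓝 (u₀ 0)) := by
  obtain ⟨hδ, hν, h3c⟩ := h3
  set F : ℕ → ℝ → ℝ := fun n s => Real.exp (2 * ν * s) * ‖u n s - u₀ s‖ ^ 2 with hFdef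
  have hFnn : ∀ n s, 0 ≤ F n s := fun n s => by positivity
  have hF_int : ∀ n, IntegrableOn (F n) (Set.Iic (0:ℝ)) := fun n =>
    diff_integrable (htr n).1 htr0.1 (ham n) ham0
  set I : ℕ → ℝ := fun n => ∫ s in Set.Iic (0:ℝ), F n s with hIdef
  have hInn : ∀ n, 0 ≤ I n := fun n =>
    setIntegral_nonneg measurableSet_Iic fun s _ => hFnn n s
  have hkey : ∀ n, δ * I n ≤ ‖P‖ * ‖Pi (u n 0 - u₀ 0)‖ ^ 2 := fun n =>
    key_inequality hcoc P h1 ⟨hδ, hν, h3c⟩ hPi (htr n) htr0 (ham n) ham0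
  -- I n → 0
  have hJ : Tendsto (fun n => ‖P‖ * ‖Pi (u n 0 - u₀ 0)‖ ^ 2) atTop (𝓝 0) := by
    have h0 : Tendsto (fun n => Pi (u n 0) - Pi (u₀ 0)) atTop (𝓝 0) := by
      simpa using hconv.sub_const (Pi (u₀ 0))
    have h1' : Tendsto (fun n => ‖Pi (u n 0 - u₀ 0)‖) atTop (𝓝 0) := by
      have := h0.norm
      simp only [norm_zero] at this
      simpa [map_sub] using this
    have := (h1'.pow 2).const_mul ‖P‖
    simpa using this
  have hI : Tendsto I atTop (𝓝 0) := by
    apply squeeze_zero hInn (g := fun n => δ⁻¹ * (‖P‖ * ‖Pi (u n 0 - u₀ 0)‖ ^ 2))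
    · intro n
      rw [← inv_mul_cancel_left₀ (ne_of_gt hδ) (I n)]
      exact mul_le_mul_of_nonneg_left (hkey n) (by positivity)
    · simpa using hJ.const_mul δ⁻¹
  -- choose σ n ∈ [-2,-1] where F n is small
  have hexσ : ∀ n : ℕ, ∃ σ ∈ Set.Icc (-2:ℝ) (-1), F n σ ≤ I n + 1 / (n + 1) := by
    intro n
    by_contra hcon
    push_neg at hcon
    have hsub : Set.Icc (-2:ℝ) (-1) ⊆ Set.Iic (0:ℝ) := fun x hx => le_trans hx.2 (by norm_num)
    have hIcc_int : IntegrableOn (F n) (Set.Icc (-2:ℝ) (-1)) := (hF_int n).mono_set hsub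
    have hvol : (volume (Set.Icc (-2:ℝ) (-1))).toReal = 1 := by
      rw [Real.volume_Icc]; norm_num
    have hge : (I n + 1 / (n + 1)) * (volume (Set.Icc (-2:ℝ) (-1))).toReal ≤
        ∫ x in Set.Icc (-2:ℝ) (-1), F n x :=
      setIntegral_ge_of_const_le_real measurableSet_Icc
        (by rw [Real.volume_Icc]; exact ENNReal.ofReal_ne_top)
        (fun x hx => (hcon x hx).le) hIcc_int
    have hle : ∫ x in Set.Icc (-2:ℝ) (-1), F n x ≤ I n :=
      setIntegral_mono_set (hF_int n)
        (Filter.Eventually.of_forall fun s => hFnn n s) hsub.eventuallyLE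
    rw [hvol, mul_one] at hge
    have : (0:ℝ) < 1 / (n + 1) := by positivity
    linarith
  choose σs hσmem hσle using hexσ
  -- u n (σs n) - u₀ (σs n) → 0
  have hd : Tendsto (fun n => u n (σs n) - u₀ (σs n)) atTop (𝓝 0) := by
    refine squeeze_zero_norm
      (a := fun n => Real.sqrt (Real.exp (4 * ν) * (I n + 1 / (n + 1)))) ?_ ?_
    · intro n
      have hmem := hσmem n
      have hle' := hσle n
      have he1 : Real.exp (-(2 * ν * σs n)) ≤ Real.exp (4 * ν) := by
        apply Real.exp_le_exp.mpr
        nlinarith [hmem.1, hmem.2, hν]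
      have hepos : (0:ℝ) < Real.exp (2 * ν * σs n) := Real.exp_pos _
      have hsq : ‖u n (σs n) - u₀ (σs n)‖ ^ 2 ≤ Real.exp (4 * ν) * (I n + 1 / (n + 1)) := by
        have hIc : 0 ≤ I n + 1 / (n + 1) := by positivity
        have h2 : ‖u n (σs n) - u₀ (σs n)‖ ^ 2 =
            Real.exp (-(2 * ν * σs n)) * F n (σs n) := by
          rw [hFdef]
          simp only []
          rw [← mul_assoc, ← Real.exp_add]
          simp
        rw [h2]
        calc Real.exp (-(2 * ν * σs n)) * F n (σs n) ≤
              Real.exp (-(2 * ν * σs n)) * (I n + 1 / (n + 1)) :=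
            mul_le_mul_of_nonneg_left hle' (Real.exp_pos _).le
          _ ≤ Real.exp (4 * ν) * (I n + 1 / (n + 1)) :=
            mul_le_mul_of_nonneg_right he1 hIc
      calc ‖u n (σs n) - u₀ (σs n)‖ = Real.sqrt (‖u n (σs n) - u₀ (σs n)‖ ^ 2) := by
            rw [Real.sqrt_sq (norm_nonneg _)]
        _ ≤ Real.sqrt (Real.exp (4 * ν) * (I n + 1 / (n + 1))) := Real.sqrt_le_sqrt hsq
    · have htend : Tendsto (fun n : ℕ => Real.exp (4 * ν) * (I n + 1 / (n + 1))) atTop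
          (𝓝 0) := by
        have := (hI.add tendsto_one_div_add_atTop_nhds_zero_nat).const_mul (Real.exp (4 * ν))
        simpa using this
      have := (Real.continuous_sqrt.tendsto 0).comp htend
      simpa [Function.comp_def] using this
  -- subsequence argument
  apply Filter.tendsto_of_subseq_tendsto
  intro ns hns
  obtain ⟨σl, hσl, φ, hφ, hφt⟩ :=
    isCompact_Icc.tendsto_subseq (x := fun k => σs (ns k)) (fun k => hσmem (ns k))
  refine ⟨φ, ?_⟩
  set m : ℕ → ℕ := fun k => ns (φ k) with hm
  have hmt : Tendsto m atTop atTop := hns.comp hφ.tendsto_atTop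
  have hσt : Tendsto (fun k => σs (m k)) atTop (𝓝 σl) := hφt
  have hu0c : Tendsto (fun k => u₀ (σs (m k))) atTop (𝓝 (u₀ σl)) :=
    (htr0.1.tendsto σl).comp hσt
  have hdm : Tendsto (fun k => u (m k) (σs (m k)) - u₀ (σs (m k))) atTop (𝓝 0) :=
    hd.comp hmt
  have hum : Tendsto (fun k => u (m k) (σs (m k))) atTop (𝓝 (u₀ σl)) := by
    have := hdm.add hu0c
    simpa using this
  have hθ : Tendsto (fun k => ϑ (σs (m k)) q) atTop (𝓝 (ϑ σl q)) := by
    have hc : Continuous fun p : ℝ × Q => ϑ p.1 p.2 := hflow.2.2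
    exact (hc.tendsto (σl, q)).comp (hσt.prodMk_nhds tendsto_const_nhds)
  set p : ℕ → ℝ × Q × H := fun k =>
    (-(σs (m k)), ϑ (σs (m k)) q, u (m k) (σs (m k))) with hp
  have hpt : Tendsto p atTop (𝓝 (-σl, ϑ σl q, u₀ σl)) :=
    (hσt.neg).prodMk_nhds (hθ.prodMk_nhds hum)
  have hpmem : ∀ k, p k ∈ {p : ℝ × Q × H | 0 ≤ p.1} := by
    intro k
    have := (hσmem (m k)).2
    simp only [hp, Set.mem_setOf_eq]
    linarith
  have hlmem : (-σl, ϑ σl q, u₀ σl) ∈ {p : ℝ × Q × H | 0 ≤ p.1} := by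
    have := hσl.2
    simp only [Set.mem_setOf_eq]
    linarith
  have hcw : ContinuousWithinAt (fun p : ℝ × Q × H => ψ p.1 p.2.1 p.2.2)
      {p : ℝ × Q × H | 0 ≤ p.1} (-σl, ϑ σl q, u₀ σl) := hcoc.2.2 _ hlmem
  have hΨ : Tendsto (fun k => ψ (p k).1 (p k).2.1 (p k).2.2) atTop
      (𝓝 (ψ (-σl) (ϑ σl q) (u₀ σl))) := by
    refine hcw.tendsto.comp ?_
    rw [tendsto_nhdsWithin_iff]
    exact ⟨hpt, Filter.Eventually.of_forall hpmem⟩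
  have hid : ∀ k, ψ (p k).1 (p k).2.1 (p k).2.2 = u (m k) 0 := by
    intro k
    have h := (htr (m k)).2 (-(σs (m k))) (σs (m k))
      (by have := (hσmem (m k)).2; linarith)
    simp only [hp]
    simp at h
    rw [h]
  have hid0 : ψ (-σl) (ϑ σl q) (u₀ σl) = u₀ 0 := by
    have h := htr0.2 (-σl) σl (by have := hσl.2; linarith)
    simp at h
    rw [h]
  rw [hid0] at hΨ
  have : (fun k => ψ (p k).1 (p k).2.1 (p k).2.2) = fun k => u (m k) 0 := funext hid
  rwa [this] at hΨ

end AuxLemmas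

/-- Lemma 2: under (H1), (H3) and (H4), the restriction of the orthogonal projection `Π`
onto `H⁻` to the amenable set `𝔄(q)` is a homeomorphism onto its image `Π 𝔄(q)`. -/
theorem projection_homeomorphism_onto_image
    {Q H : Type*} [MetricSpace Q] [NormedAddCommGroup H] [InnerProductSpace ℝ H]
    [CompleteSpace H] [TopologicalSpace.SeparableSpace H]
    (ϑ : ℝ → Q → Q) (ψ : ℝ → Q → H → H)
    (hflow : IsFlow ϑ) (hcoc : IsCocycle ϑ ψ)
    (P : H →L[ℝ] H) (Hplus Hminus : Submodule ℝ H)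
    (h1 : HypH1 P Hplus Hminus)
    (δ ν : ℝ) (h3 : HypH3 ψ P δ ν)
    (h4 : ∀ q : Q, (amenSet ϑ ψ ν q).Nonempty)
    (Pi : H →L[ℝ] H) (hPi : IsOrthProjOnto Hminus Pi)
    (q : Q) :
    ∃ e : ↥(amenSet ϑ ψ ν q) ≃ₜ ↥(Pi '' (amenSet ϑ ψ ν q)),
      ∀ x : ↥(amenSet ϑ ψ ν q), (e x : H) = Pi (x : H) := by
  classical
  set A := amenSet ϑ ψ ν q with hA
  have hinj : ∀ x ∈ A, ∀ y ∈ A, Pi x = Pi y → x = y := by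
    intro x hx y hy hxy
    obtain ⟨w1, hw1t, hw1a, hw10⟩ := hx
    obtain ⟨w2, hw2t, hw2a, hw20⟩ := hy
    rw [← hw10, ← hw20] at hxy ⊢
    exact inj_lemma hcoc P h1 h3 hPi hw1t hw2t hw1a hw2a hxy
  let f : ↥A → ↥(Pi '' A) := fun x => ⟨Pi x, ⟨(x : H), x.2, rfl⟩⟩
  have hfinj : Function.Injective f := by
    intro x y hxy
    exact Subtype.ext (hinj _ x.2 _ y.2 (congrArg Subtype.val hxy))
  have hfsurj : Function.Surjective f := by
    rintro ⟨y, x, hxA, rfl⟩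
    exact ⟨⟨x, hxA⟩, rfl⟩
  let e0 := Equiv.ofBijective f ⟨hfinj, hfsurj⟩
  have hcont : Continuous f :=
    Continuous.subtype_mk (Pi.continuous.comp continuous_subtype_val) _
  have hcontinv : Continuous e0.symm := by
    rw [continuous_iff_seqContinuous]
    intro y yl hy
    rw [tendsto_subtype_rng]
    have hPix : ∀ n : ℕ, Pi ((e0.symm (y n) : ↥A) : H) = ((y n : ↥(Pi '' A)) : H) := fun n =>
      congrArg Subtype.val (e0.apply_symm_apply (y n))
    have hPixl : Pi ((e0.symm yl : ↥A) : H) = (yl : H) :=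
      congrArg Subtype.val (e0.apply_symm_apply yl)
    have hmem : ∀ n : ℕ, ∃ w : ℝ → H, IsCompleteTraj ϑ ψ q w ∧ IsAmenable ν w ∧
        w 0 = ((e0.symm (y n) : ↥A) : H) := fun n => (e0.symm (y n)).2
    choose w hw1 hw2 hw3 using hmem
    obtain ⟨w0, hw01, hw02, hw03⟩ :
        ∃ w : ℝ → H, IsCompleteTraj ϑ ψ q w ∧ IsAmenable ν w ∧
          w 0 = ((e0.symm yl : ↥A) : H) := (e0.symm yl).2
    have hconv : Tendsto (fun n => Pi (w n 0)) atTop (𝓝 (Pi (w0 0))) := by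
      have h1' : (fun n => Pi (w n 0)) = fun n => ((y n : ↥(Pi '' A)) : H) :=
        funext fun n => by rw [hw3 n, hPix n]
      rw [h1', hw03, hPixl]
      exact tendsto_subtype_rng.mp hy
    have hfin := seq_tendsto hflow hcoc P h1 h3 hPi hw1 hw2 hw01 hw02 hconv
    have h2' : (fun n => w n 0) = fun n => ((e0.symm (y n) : ↥A) : H) :=
      funext fun n => hw3 n
    rw [h2', hw03] at hfin
    exact hfin
  exact ⟨Homeomorph.mk e0 hcont hcontinv, fun x => rfl⟩
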